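/- Let U and U' be finite-dimensional real vector spaces, let C ⊆ U be a nonempty open convex cone, and let K ⊆ C × U' be an open subset that is invariant under translations in C × {0}, i.e. k + (c,0) ∈ K for all k ∈ K and c ∈ C. Then the restriction of the projection U × U' → U' to a map from K onto its image π_{U'}(K) is a homotopy equivalence. -/

import Mathlib

open Metric Set

private lemma inv_perturb {m δ ε x y : ℝ} (hm : 0 < m) (hδ0 : 0 ≤ δ) (hmx : m ≤ x)
    (hδ2 : δ ≤ m / 2) (hδε : δ ≤ ε * m ^ 2 / 4) (hxy : x - δ ≤ y) :
    y⁻¹ ≤ x⁻¹ + ε / 2 := by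
  have hx0 : 0 < x := lt_of_lt_of_le hm hmx
  have hxδ : 0 < x - δ := by linarith
  have hy0 : 0 < y := lt_of_lt_of_le hxδ hxy
  have hε0 : 0 ≤ ε := by nlinarith [mul_pos hm hm]
  have h1 : y⁻¹ ≤ (x - δ)⁻¹ := by
    apply inv_anti₀ hxδ hxy
  have h2 : (x - δ)⁻¹ - x⁻¹ = δ / ((x - δ) * x) := by
    field_simp
    ring
  have hprod : m / 2 * m ≤ (x - δ) * x := by nlinarith
  have h3 : δ / ((x - δ) * x) ≤ ε / 2 := by
    rw [div_le_iff₀ (by positivity)]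
    nlinarith [mul_le_mul_of_nonneg_left hprod (by linarith : (0:ℝ) ≤ ε / 2)]
  linarith

/-- Let `C` be a nonempty open convex cone in a finite-dimensional real vector space `U` and
let `K ⊆ C × U'` be an open subset invariant under translations in `C × {0}`. Then the
restriction to `K` of the projection `U × U' → U'`, viewed as a map onto its image
`π_{U'}(K)`, is a homotopy equivalence. -/
theorem projection_of_cone_invariant_homotopyEquiv {U U' : Type}
    [NormedAddCommGroup U] [NormedSpace ℝ U] [FiniteDimensional ℝ U]
    [NormedAddCommGroup U'] [NormedSpace ℝ U'] [FiniteDimensional ℝ U']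
    (C : Set U) (hCne : C.Nonempty) (hCopen : IsOpen C) (hCconv : Convex ℝ C)
    (hCcone : ∀ x ∈ C, ∀ t : ℝ, 0 < t → t • x ∈ C)
    (K : Set (U × U')) (hKopen : IsOpen K) (hKsub : K ⊆ C ×ˢ (Set.univ : Set U'))
    (hKinv : ∀ k ∈ K, ∀ c ∈ C, k + (c, (0 : U')) ∈ K)
    (f : C(K, Prod.snd '' K)) (hf : ∀ k : K, (f k : U') = (k : U × U').2) :
    ∃ g : C(Prod.snd '' K, K),
      (g.comp f).Homotopic (ContinuousMap.id _) ∧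
      (f.comp g).Homotopic (ContinuousMap.id _) := by
  classical
  obtain ⟨c0, hc0⟩ := hCne
  have hmemC : ∀ {x : U} {y : U'}, (x, y) ∈ K → x ∈ C := fun h => (hKsub h).1
  have hsmul : ∀ (x : U) (y : U') (a : ℝ), (x, y) ∈ K → 1 ≤ a → (a • x, y) ∈ K := by
    intro x y a hxy ha
    rcases eq_or_lt_of_le ha with h | h
    · rw [← h, one_smul]; exact hxy
    · have hx : x ∈ C := hmemC hxy
      have hz : (a - 1) • x ∈ C := hCcone x hx _ (by linarith)
      have h2 := hKinv _ hxy _ hz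
      have h3 : (x, y) + ((a - 1) • x, (0 : U')) = (a • x, y) := by
        rw [Prod.mk_add_mk, add_zero]
        congr 1
        module
      rwa [h3] at h2
  have hcomb : ∀ (x : U) (y : U') (z : U) (a b : ℝ),
      (x, y) ∈ K → z ∈ C → 1 ≤ a → 0 ≤ b → (a • x + b • z, y) ∈ K := by
    intro x y z a b hxy hz ha hb
    have hax := hsmul x y a hxy ha
    rcases eq_or_lt_of_le hb with h | h
    · rw [← h, zero_smul, add_zero]; exact hax
    · have hbz : b • z ∈ C := hCcone z hz b h
      have h2 := hKinv _ hax _ hbz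
      rwa [Prod.mk_add_mk, add_zero] at h2
  rcases eq_empty_or_nonempty Kᶜ with hKc | hKc
  · -- degenerate case : K = univ
    have hKuniv : K = univ := by rwa [compl_empty_iff] at hKc
    have hKall : ∀ p : U × U', p ∈ K := fun p => hKuniv ▸ mem_univ p
    set g : C(Prod.snd '' K, K) :=
      ⟨fun y => ⟨((0 : U), y.1), hKall _⟩,
        (continuous_const.prodMk continuous_subtype_val).subtype_mk _⟩ with hgdef
    have hfg : f.comp g = ContinuousMap.id _ := by
      ext y
      rw [ContinuousMap.comp_apply, hf]
      rfl
    refine ⟨g, ⟨⟨⟨fun q => ⟨((q.1 : ℝ) • (q.2 : U × U').1, (q.2 : U × U').2), hKall _⟩, ?_⟩,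
      ?_, ?_⟩⟩, by rw [hfg]⟩
    · apply Continuous.subtype_mk
      exact ((continuous_subtype_val.comp continuous_fst).smul
        (continuous_fst.comp (continuous_subtype_val.comp continuous_snd))).prodMk
        (continuous_snd.comp (continuous_subtype_val.comp continuous_snd))
    · intro k
      apply Subtype.ext
      show (((0 : unitInterval) : ℝ) • (k : U × U').1, (k : U × U').2) = _
      rw [ContinuousMap.comp_apply, hgdef]
      simp [hf k]
    · intro k
      apply Subtype.ext
      show (((1 : unitInterval) : ℝ) • (k : U × U').1, (k : U × U').2) = _
      simp
  · -- main case : Kᶜ nonempty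
    set ρ : U × U' → ℝ := fun p => infDist p Kᶜ with hρdef
    have hρpos : ∀ p ∈ K, 0 < ρ p := fun p hp =>
      (hKopen.isClosed_compl.notMem_iff_infDist_pos hKc).1 (by simpa using hp)
    have hρmem : ∀ p : U × U', 0 < ρ p → p ∈ K := by
      intro p hp
      by_contra h
      have h0 : ρ p = 0 := infDist_zero_of_mem h
      rw [h0] at hp
      exact lt_irrefl _ hp
    have hρd : ∀ (t : ℝ) (y y' : U'), ρ (t • c0, y) - dist y' y ≤ ρ (t • c0, y') := by
      intro t y y'
      have h := infDist_le_infDist_add_dist (x := ((t • c0, y) : U × U'))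
        (y := ((t • c0, y') : U × U')) (s := Kᶜ)
      have hd : dist ((t • c0, y) : U × U') ((t • c0, y') : U × U') = dist y' y := by
        rw [Prod.dist_eq, dist_self, dist_comm]
        exact max_eq_right dist_nonneg
      rw [hd] at h
      linarith
    set T : U' → Set ℝ :=
      fun y => {r | ∃ t : ℝ, 0 < t ∧ (t • c0, y) ∈ K ∧ r = t + (ρ (t • c0, y))⁻¹} with hTdef
    set σ : U' → ℝ := fun y => sInf (T y) with hσdef
    have hT0 : ∀ y : U', ∀ r ∈ T y, 0 ≤ r := by
      rintro y r ⟨t, ht, -, rfl⟩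
      have h1 : 0 ≤ (ρ (t • c0, y))⁻¹ := inv_nonneg.2 infDist_nonneg
      linarith
    have hTbdd : ∀ y : U', BddBelow (T y) := fun y => ⟨0, fun r hr => hT0 y r hr⟩
    have hσ0 : ∀ y : U', 0 ≤ σ y := fun y => Real.sInf_nonneg (hT0 y)
    have hTne : ∀ y ∈ Prod.snd '' K, (T y).Nonempty := by
      rintro y ⟨p, hpK, rfl⟩
      obtain ⟨ε, hε, hball⟩ := Metric.isOpen_iff.1 hCopen c0 hc0
      set t : ℝ := ‖p.1‖ / ε + 1 with htdef
      have ht0 : 0 < t := by positivity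
      have hmem : c0 - t⁻¹ • p.1 ∈ C := by
        apply hball
        rw [mem_ball, dist_eq_norm]
        have h1 : c0 - t⁻¹ • p.1 - c0 = -(t⁻¹ • p.1) := by abel
        rw [h1, norm_neg, norm_smul, Real.norm_eq_abs, abs_of_pos (inv_pos.2 ht0),
          inv_mul_eq_div, div_lt_iff₀ ht0]
        have h2 : ε * t = ‖p.1‖ + ε := by
          rw [htdef]
          field_simp
        rw [h2]
        linarith
      have hc : t • (c0 - t⁻¹ • p.1) ∈ C := hCcone _ hmem t ht0
      have heq : ((t • c0, p.2) : U × U') = (p.1, p.2) + (t • (c0 - t⁻¹ • p.1), (0 : U')) := by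
        rw [Prod.mk_add_mk, add_zero]
        congr 1
        rw [smul_sub, smul_inv_smul₀ (ne_of_gt ht0)]
        abel
      have hK' : ((t • c0, p.2) : U × U') ∈ K := by
        rw [heq]
        exact hKinv _ (by rw [Prod.mk.eta]; exact hpK) _ hc
      exact ⟨t + (ρ (t • c0, p.2))⁻¹, t, ht0, hK', rfl⟩
    have hσmem : ∀ y ∈ Prod.snd '' K, ((σ y + 1) • c0, y) ∈ K := by
      intro y hy
      obtain ⟨r, hrT, hrlt⟩ := Real.lt_sInf_add_pos (hTne y hy) one_pos
      obtain ⟨t, ht0, htK, rfl⟩ := hrT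
      have hinv : 0 ≤ (ρ (t • c0, y))⁻¹ := inv_nonneg.2 infDist_nonneg
      have hσy : σ y = sInf (T y) := rfl
      have htle : t < σ y + 1 := by rw [hσy]; linarith
      have hd : (((σ y + 1) • c0, y) : U × U') = (t • c0, y) + ((σ y + 1 - t) • c0, (0 : U')) := by
        rw [Prod.mk_add_mk, add_zero]
        congr 1
        module
      rw [hd]
      exact hKinv _ htK _ (hCcone c0 hc0 _ (by linarith))
    have husc : ∀ y ∈ Prod.snd '' K, ∀ ε : ℝ, 0 < ε → ∃ δ : ℝ, 0 < δ ∧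
        ∀ y' : U', dist y' y < δ → y' ∈ Prod.snd '' K ∧ σ y' < σ y + ε := by
      intro y hy ε hε
      obtain ⟨r, hrT, hrlt⟩ := Real.lt_sInf_add_pos (hTne y hy) (half_pos hε)
      obtain ⟨t, ht0, htK, rfl⟩ := hrT
      have hm0 : 0 < ρ (t • c0, y) := hρpos _ htK
      refine ⟨min (ρ (t • c0, y) / 2) (ε * (ρ (t • c0, y)) ^ 2 / 4), by positivity, ?_⟩
      intro y' hy'
      have hd1 : dist y' y ≤ ρ (t • c0, y) / 2 :=
        le_of_lt (lt_of_lt_of_le hy' (min_le_left _ _))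
      have hd2 : dist y' y ≤ ε * (ρ (t • c0, y)) ^ 2 / 4 :=
        le_of_lt (lt_of_lt_of_le hy' (min_le_right _ _))
      have hρ' : ρ (t • c0, y) - dist y' y ≤ ρ (t • c0, y') := hρd t y y'
      have hρ'pos : 0 < ρ (t • c0, y') := by linarith
      have hK' : ((t • c0, y') : U × U') ∈ K := hρmem _ hρ'pos
      have hS' : y' ∈ Prod.snd '' K := ⟨(t • c0, y'), hK', rfl⟩
      have hle : σ y' ≤ t + (ρ (t • c0, y'))⁻¹ := csInf_le (hTbdd y') ⟨t, ht0, hK', rfl⟩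
      have hperturb : (ρ (t • c0, y'))⁻¹ ≤ (ρ (t • c0, y))⁻¹ + ε / 2 :=
        inv_perturb hm0 dist_nonneg (le_refl _) hd1 hd2 hρ'
      have hσy : σ y = sInf (T y) := rfl
      rw [← hσy] at hrlt
      exact ⟨hS', by linarith⟩
    have hlsc : ∀ y ∈ Prod.snd '' K, ∀ ε : ℝ, 0 < ε → ∃ δ : ℝ, 0 < δ ∧
        ∀ y' : U', dist y' y < δ → σ y < σ y' + ε := by
      intro y hy ε hε
      set ε' : ℝ := min ε 1 with hε'def
      have hε'0 : 0 < ε' := lt_min hε one_pos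
      have hε'1 : ε' ≤ 1 := min_le_right _ _
      have hε'ε : ε' ≤ ε := min_le_left _ _
      obtain ⟨δ₁, hδ₁0, h₁⟩ := husc y hy 1 one_pos
      set m : ℝ := (σ y + 2)⁻¹ with hmdef
      have hσy2 : 0 < σ y + 2 := by linarith [hσ0 y]
      have hm0 : 0 < m := inv_pos.2 hσy2
      refine ⟨min δ₁ (min (m / 2) (ε' * m ^ 2 / 4)), by positivity, ?_⟩
      intro y' hy'
      have hyd1 : dist y' y < δ₁ := lt_of_lt_of_le hy' (min_le_left _ _)
      obtain ⟨hS', hB⟩ := h₁ y' hyd1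
      obtain ⟨r, hrT, hrlt⟩ := Real.lt_sInf_add_pos (hTne y' hS') (half_pos hε'0)
      obtain ⟨t, ht0, htK, rfl⟩ := hrT
      have hσy' : σ y' = sInf (T y') := rfl
      rw [← hσy'] at hrlt
      have hρ'0 : 0 < ρ (t • c0, y') := hρpos _ htK
      have hinvlt : (ρ (t • c0, y'))⁻¹ < σ y + 2 := by
        have h2 : 0 ≤ (ρ (t • c0, y'))⁻¹ := inv_nonneg.2 infDist_nonneg
        linarith
      have hmlt : m < ρ (t • c0, y') := by
        have h3 := inv_strictAnti₀ (inv_pos.2 hρ'0) hinvlt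
        rwa [inv_inv, ← hmdef] at h3
      have hd1 : dist y y' ≤ m / 2 := by
        rw [dist_comm]
        exact le_of_lt (lt_of_lt_of_le hy' (le_trans (min_le_right _ _) (min_le_left _ _)))
      have hd2 : dist y y' ≤ ε' * m ^ 2 / 4 := by
        rw [dist_comm]
        exact le_of_lt (lt_of_lt_of_le hy' (le_trans (min_le_right _ _) (min_le_right _ _)))
      have hρy : ρ (t • c0, y') - dist y y' ≤ ρ (t • c0, y) := hρd t y' y
      have hρypos : 0 < ρ (t • c0, y) := by linarith
      have hKy : ((t • c0, y) : U × U') ∈ K := hρmem _ hρypos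
      have hle : σ y ≤ t + (ρ (t • c0, y))⁻¹ := csInf_le (hTbdd y) ⟨t, ht0, hKy, rfl⟩
      have hperturb : (ρ (t • c0, y))⁻¹ ≤ (ρ (t • c0, y'))⁻¹ + ε' / 2 :=
        inv_perturb hm0 dist_nonneg (le_of_lt hmlt) hd1 hd2 hρy
      linarith
    have hσat : ∀ y ∈ Prod.snd '' K, ContinuousAt σ y := by
      intro y hy
      rw [Metric.continuousAt_iff]
      intro ε hε
      obtain ⟨δ₁, hδ₁, h₁⟩ := husc y hy ε hε
      obtain ⟨δ₂, hδ₂, h₂⟩ := hlsc y hy ε hε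
      refine ⟨min δ₁ δ₂, lt_min hδ₁ hδ₂, ?_⟩
      intro y' hy'
      have ha := (h₁ y' (lt_of_lt_of_le hy' (min_le_left _ _))).2
      have hb := h₂ y' (lt_of_lt_of_le hy' (min_le_right _ _))
      rw [Real.dist_eq, abs_sub_lt_iff]
      exact ⟨by linarith, by linarith⟩
    -- the continuous section
    have hgc : Continuous fun y : Prod.snd '' K => (((σ y.1 + 1) • c0, y.1) : U × U') := by
      have h1 : Continuous fun y : Prod.snd '' K => σ y.1 := by
        rw [continuous_iff_continuousAt]
        intro z
        exact (hσat z.1 z.2).comp continuous_subtype_val.continuousAt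
      exact ((h1.add continuous_const).smul continuous_const).prodMk continuous_subtype_val
    set g : C(Prod.snd '' K, K) :=
      ⟨fun y => ⟨((σ y.1 + 1) • c0, y.1), hσmem y.1 y.2⟩, hgc.subtype_mk _⟩ with hgdef
    have hfg : f.comp g = ContinuousMap.id _ := by
      ext y
      rw [ContinuousMap.comp_apply, hf]
      rfl
    have hσK : Continuous fun k : K => σ (k : U × U').2 := by
      rw [continuous_iff_continuousAt]
      intro k
      have h2 : ContinuousAt (fun k : K => (k : U × U').2) k :=
        (continuous_snd.comp continuous_subtype_val).continuousAt
      exact ContinuousAt.comp (g := σ) (f := fun k : K => (k : U × U').2)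
        (hσat _ ⟨(k : U × U'), k.2, rfl⟩) h2
    have hHmem : ∀ (t : ℝ), 0 ≤ t → t ≤ 1 → ∀ k : K,
        (((t * (5 - 4 * t)) • (k : U × U').1 +
          ((1 - t) * (1 + 4 * t)) • ((σ (k : U × U').2 + 1) • c0), (k : U × U').2) : U × U') ∈ K := by
      intro t ht0 ht1 k
      have hk : (((k : U × U').1, (k : U × U').2) : U × U') ∈ K := by
        rw [Prod.mk.eta]; exact k.2
      have hx : (k : U × U').1 ∈ C := hmemC hk
      have hyS : (k : U × U').2 ∈ Prod.snd '' K := ⟨(k : U × U'), k.2, rfl⟩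
      have hs : (((σ (k : U × U').2 + 1) • c0, (k : U × U').2) : U × U') ∈ K := hσmem _ hyS
      have hsC : (σ (k : U × U').2 + 1) • c0 ∈ C :=
        hCcone c0 hc0 _ (by linarith [hσ0 (k : U × U').2])
      rcases le_total t (1 / 2) with h | h
      · have hB1 : 1 ≤ (1 - t) * (1 + 4 * t) := by nlinarith
        have hA0 : 0 ≤ t * (5 - 4 * t) := by nlinarith
        have h2 := hcomb _ _ _ _ _ hs hx hB1 hA0
        rw [add_comm ((t * (5 - 4 * t)) • (k : U × U').1)]
        exact h2
      · have hA1 : 1 ≤ t * (5 - 4 * t) := by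
          nlinarith [mul_nonneg (by linarith : (0:ℝ) ≤ 4 * t - 1) (by linarith : (0:ℝ) ≤ 1 - t)]
        have hB0 : 0 ≤ (1 - t) * (1 + 4 * t) := by nlinarith
        exact hcomb _ _ _ _ _ hk hsC hA1 hB0
    have hHcont : Continuous fun q : unitInterval × K =>
        (((((q.1 : ℝ)) * (5 - 4 * (q.1 : ℝ))) • (q.2 : U × U').1 +
          ((1 - (q.1 : ℝ)) * (1 + 4 * (q.1 : ℝ))) • ((σ (q.2 : U × U').2 + 1) • c0),
          (q.2 : U × U').2) : U × U') := by
      have ht : Continuous fun q : unitInterval × K => (q.1 : ℝ) :=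
        continuous_subtype_val.comp continuous_fst
      have hk1 : Continuous fun q : unitInterval × K => (q.2 : U × U').1 :=
        continuous_fst.comp (continuous_subtype_val.comp continuous_snd)
      have hk2 : Continuous fun q : unitInterval × K => (q.2 : U × U').2 :=
        continuous_snd.comp (continuous_subtype_val.comp continuous_snd)
      have hσq : Continuous fun q : unitInterval × K => σ (q.2 : U × U').2 :=
        hσK.comp continuous_snd
      have hA : Continuous fun q : unitInterval × K => ((q.1 : ℝ)) * (5 - 4 * (q.1 : ℝ)) :=
        ht.mul (continuous_const.sub (continuous_const.mul ht))
      have hB : Continuous fun q : unitInterval × K => (1 - (q.1 : ℝ)) * (1 + 4 * (q.1 : ℝ)) :=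
        (continuous_const.sub ht).mul (continuous_const.add (continuous_const.mul ht))
      exact ((hA.smul hk1).add (hB.smul ((hσq.add continuous_const).smul continuous_const))).prodMk hk2
    refine ⟨g, ⟨⟨⟨fun q => ⟨_, hHmem (q.1 : ℝ) q.1.2.1 q.1.2.2 q.2⟩, hHcont.subtype_mk _⟩,
      ?_, ?_⟩⟩, by rw [hfg]⟩
    · intro k
      apply Subtype.ext
      rw [ContinuousMap.comp_apply, hgdef]
      show ((((0 : unitInterval) : ℝ) * (5 - 4 * ((0 : unitInterval) : ℝ))) • (k : U × U').1 +
        ((1 - ((0 : unitInterval) : ℝ)) * (1 + 4 * ((0 : unitInterval) : ℝ))) •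
          ((σ (k : U × U').2 + 1) • c0), (k : U × U').2) = _
      simp [hf k]
    · intro k
      apply Subtype.ext
      show ((((1 : unitInterval) : ℝ) * (5 - 4 * ((1 : unitInterval) : ℝ))) • (k : U × U').1 +
        ((1 - ((1 : unitInterval) : ℝ)) * (1 + 4 * ((1 : unitInterval) : ℝ))) •
          ((σ (k : U × U').2 + 1) • c0), (k : U × U').2) = _
      norm_num
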